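/- For all natural numbers k and e there exists a natural number N such that for every regressive coloring c of the e-element subsets of {1,2,...,N} (i.e., c(x) < min x for every e-element subset x) there exists a subset B of {1,2,...,N} of size k that is min-homogeneous for c (i.e., for all e-element subsets x of B the color c(x) depends only on min x). -/

import Mathlib

open Classical in
theorem ramsey_inf (e : ℕ) : ∀ (r : ℕ) (c : Finset ℕ → ℕ), (∀ x, c x < r) →
    ∀ S : Set ℕ, S.Infinite → ∃ H, H ⊆ S ∧ H.Infinite ∧ ∃ v,
      ∀ x : Finset ℕ, ↑x ⊆ H → x.card = e → c x = v := by
  induction e with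
  | zero =>
    intro r c hc S hS
    refine ⟨S, le_refl _, hS, c ∅, fun x hx hcard => ?_⟩
    rw [Finset.card_eq_zero] at hcard; rw [hcard]
  | succ e ih =>
    intro r c hc S hS
    have key : ∀ T : Set ℕ, T.Infinite → ∃ p : Set ℕ × ℕ,
        p.1 ⊆ T \ {sInf T} ∧ p.1.Infinite ∧
        ∀ y : Finset ℕ, ↑y ⊆ p.1 → y.card = e → c (insert (sInf T) y) = p.2 := by
      intro T hT
      obtain ⟨H', hH'sub, hH'inf, v, hv⟩ :=
        ih r (fun y => c (insert (sInf T) y)) (fun y => hc _) (T \ {sInf T})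
          (hT.diff (Set.finite_singleton _))
      exact ⟨⟨H', v⟩, hH'sub, hH'inf, hv⟩
    let F : Set ℕ → Set ℕ × ℕ := fun T =>
      if h : T.Infinite then (key T h).choose else (Set.univ, 0)
    let Tseq : ℕ → Set ℕ := fun n => Nat.rec S (fun _ T => (F T).1) n
    let a : ℕ → ℕ := fun n => sInf (Tseq n)
    let v : ℕ → ℕ := fun n => (F (Tseq n)).2
    have hT0 : Tseq 0 = S := rfl
    have hTstep : ∀ n, Tseq (n + 1) = (F (Tseq n)).1 := fun n => rfl
    have hinf : ∀ n, (Tseq n).Infinite := by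
      intro n; induction n with
      | zero => exact hS
      | succ n ihn =>
        rw [hTstep n]
        simp only [F, dif_pos ihn]
        exact (key (Tseq n) ihn).choose_spec.2.1
    have hsub : ∀ n, Tseq (n + 1) ⊆ Tseq n \ {a n} := by
      intro n
      rw [hTstep n]
      simp only [F, dif_pos (hinf n)]
      exact (key (Tseq n) (hinf n)).choose_spec.1
    have hv : ∀ n, ∀ y : Finset ℕ, ↑y ⊆ Tseq (n + 1) → y.card = e →
        c (insert (a n) y) = v n := by
      intro n
      have h1 := (key (Tseq n) (hinf n)).choose_spec.2.2
      intro y hy hyc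
      have : Tseq (n+1) = ((key (Tseq n) (hinf n)).choose).1 := by
        rw [hTstep n]; simp only [F, dif_pos (hinf n)]
      have hvn : v n = ((key (Tseq n) (hinf n)).choose).2 := by
        simp only [v, F, dif_pos (hinf n)]
      rw [hvn]
      exact h1 y (by rw [← this]; exact hy) hyc
    have hmono : ∀ m n, m ≤ n → Tseq n ⊆ Tseq m := by
      intro m n h
      induction n with
      | zero => rw [Nat.le_zero.mp h]
      | succ n ihn =>
        rcases Nat.lt_or_ge m (n+1) with h' | h'
        · exact ((hsub n).trans (Set.diff_subset)).trans (ihn (Nat.lt_succ_iff.mp h'))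
        · rw [le_antisymm h h']
    have hamem : ∀ n, a n ∈ Tseq n := fun n => Nat.sInf_mem (hinf n).nonempty
    have hastrict : StrictMono a := by
      apply strictMono_nat_of_lt_succ
      intro n
      have h1 : a (n+1) ∈ Tseq n \ {a n} := hsub n (hamem (n+1))
      exact lt_of_le_of_ne (Nat.sInf_le h1.1) (fun h => h1.2 h.symm)
    have haS : ∀ n, a n ∈ S := fun n => hmono 0 n (Nat.zero_le n) (hamem n)
    have hamemT : ∀ m n, m < n → a n ∈ Tseq (m + 1) := fun m n h =>
      hmono (m+1) n h (hamem n)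
    -- v n < r
    have hvlt : ∀ n, v n < r := by
      intro n
      obtain ⟨y, hy, hyc⟩ := (hinf (n+1)).exists_subset_card_eq e
      rw [← hv n y hy hyc]
      exact hc _
    -- pigeonhole
    have hpig : ∃ w, {n | v n = w}.Infinite := by
      by_contra hcon
      push_neg at hcon
      have hcon : ∀ w, {n | v n = w}.Finite := hcon
      have : (Set.univ : Set ℕ) ⊆ ⋃ w ∈ Set.Iio r, {n | v n = w} := by
        intro n _
        simp only [Set.mem_iUnion]
        exact ⟨v n, hvlt n, rfl⟩
      exact Set.infinite_univ (Set.Finite.subset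
        ((Set.finite_Iio r).biUnion (fun w _ => hcon w)) this)
    obtain ⟨w, hw⟩ := hpig
    refine ⟨a '' {n | v n = w}, ?_, hw.image (hastrict.injective.injOn), w, ?_⟩
    · rintro _ ⟨n, _, rfl⟩; exact haS n
    · intro x hx hxc
      have hxne : x.Nonempty := by
        rw [← Finset.card_pos, hxc]; exact Nat.succ_pos e
      have hmin := x.min'_mem hxne
      obtain ⟨i0, hi0, hi0eq⟩ := hx hmin
      have herase : ↑(x.erase (x.min' hxne)) ⊆ Tseq (i0 + 1) := by
        intro b hb
        rw [Finset.coe_erase] at hb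
        obtain ⟨hbx, hbne⟩ := hb
        obtain ⟨j, _, hjeq⟩ := hx hbx
        have hbgt : x.min' hxne < b :=
          lt_of_le_of_ne (Finset.min'_le x b hbx) (fun h => hbne h.symm)
        have : i0 < j := by
          apply hastrict.lt_iff_lt.mp
          rw [hi0eq, hjeq]; exact hbgt
        rw [← hjeq]
        exact hamemT i0 j this
      have hcard : (x.erase (x.min' hxne)).card = e := by
        rw [Finset.card_erase_of_mem hmin, hxc]; omega
      have := hv i0 _ herase hcard
      rw [hi0eq, Finset.insert_erase hmin] at this
      rw [this, hi0]

open Classical in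
theorem km_inf (e : ℕ) (c : Finset ℕ → ℕ) (S : Set ℕ) (hS : S.Infinite)
    (hreg : ∀ x : Finset ℕ, ↑x ⊆ S → x.card = e → ∀ hx : x.Nonempty, c x < x.min' hx) :
    ∃ H, H ⊆ S ∧ H.Infinite ∧ ∀ x y : Finset ℕ, ↑x ⊆ H → ↑y ⊆ H →
      x.card = e → y.card = e → x.min = y.min → c x = c y := by
  match e with
  | 0 =>
    refine ⟨S, le_refl _, hS, fun x y hx hy hxc hyc _ => ?_⟩
    rw [Finset.card_eq_zero] at hxc hyc; rw [hxc, hyc]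
  | e + 1 =>
    have key : ∀ T : Set ℕ, T.Infinite ∧ T ⊆ S → ∃ p : Set ℕ × ℕ,
        p.1 ⊆ T \ {sInf T} ∧ p.1.Infinite ∧
        ∀ y : Finset ℕ, ↑y ⊆ p.1 → y.card = e → c (insert (sInf T) y) = p.2 := by
      rintro T ⟨hT, hTS⟩
      set A := sInf T with hA
      have hAT : A ∈ T := Nat.sInf_mem hT.nonempty
      set d : Finset ℕ → ℕ := fun y =>
        if ↑y ⊆ T \ {A} ∧ y.card = e then c (insert A y) else 0 with hd
      have hdlt : ∀ y, d y < A + 1 := by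
        intro y
        rw [hd]
        simp only
        split_ifs with h
        · obtain ⟨hy1, hy2⟩ := h
          have hAny : A ∉ y := fun hmem => (hy1 hmem).2 rfl
          have hsubS : ↑(insert A y) ⊆ S := by
            rw [Finset.coe_insert]
            exact Set.insert_subset (hTS hAT) ((hy1.trans Set.diff_subset).trans hTS)
          have hcard : (insert A y).card = e + 1 := by
            rw [Finset.card_insert_of_notMem hAny, hy2]
          have hne : (insert A y).Nonempty := ⟨A, Finset.mem_insert_self _ _⟩
          calc c (insert A y) < (insert A y).min' hne := hreg _ hsubS hcard hne
            _ ≤ A := Finset.min'_le _ _ (Finset.mem_insert_self _ _)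
            _ < A + 1 := Nat.lt_succ_self _
        · exact Nat.succ_pos _
      obtain ⟨H', hH'sub, hH'inf, v, hv⟩ :=
        ramsey_inf e (A + 1) d hdlt (T \ {A}) (hT.diff (Set.finite_singleton _))
      refine ⟨⟨H', v⟩, hH'sub, hH'inf, fun y hy hyc => ?_⟩
      have hdy : d y = c (insert A y) := by
        rw [hd]; exact if_pos ⟨hy.trans hH'sub, hyc⟩
      rw [← hdy]; exact hv y hy hyc
    let F : Set ℕ → Set ℕ × ℕ := fun T =>
      if h : T.Infinite ∧ T ⊆ S then (key T h).choose else (Set.univ, 0)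
    let Tseq : ℕ → Set ℕ := fun n => Nat.rec S (fun _ T => (F T).1) n
    let a : ℕ → ℕ := fun n => sInf (Tseq n)
    let v : ℕ → ℕ := fun n => (F (Tseq n)).2
    have hTstep : ∀ n, Tseq (n + 1) = (F (Tseq n)).1 := fun n => rfl
    have hinf : ∀ n, (Tseq n).Infinite ∧ Tseq n ⊆ S := by
      intro n; induction n with
      | zero => exact ⟨hS, le_refl _⟩
      | succ n ihn =>
        rw [hTstep n]
        simp only [F, dif_pos ihn]
        obtain ⟨h1, h2, _⟩ := (key (Tseq n) ihn).choose_spec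
        exact ⟨h2, (h1.trans Set.diff_subset).trans ihn.2⟩
    have hsub : ∀ n, Tseq (n + 1) ⊆ Tseq n \ {a n} := by
      intro n
      rw [hTstep n]
      simp only [F, dif_pos (hinf n)]
      exact (key (Tseq n) (hinf n)).choose_spec.1
    have hv : ∀ n, ∀ y : Finset ℕ, ↑y ⊆ Tseq (n + 1) → y.card = e →
        c (insert (a n) y) = v n := by
      intro n
      have h1 := (key (Tseq n) (hinf n)).choose_spec.2.2
      intro y hy hyc
      have heq : Tseq (n+1) = ((key (Tseq n) (hinf n)).choose).1 := by
        rw [hTstep n]; simp only [F, dif_pos (hinf n)]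
      have hvn : v n = ((key (Tseq n) (hinf n)).choose).2 := by
        simp only [v, F, dif_pos (hinf n)]
      rw [hvn]
      exact h1 y (by rw [← heq]; exact hy) hyc
    have hmono : ∀ m n, m ≤ n → Tseq n ⊆ Tseq m := by
      intro m n h
      induction n with
      | zero => rw [Nat.le_zero.mp h]
      | succ n ihn =>
        rcases Nat.lt_or_ge m (n+1) with h' | h'
        · exact ((hsub n).trans (Set.diff_subset)).trans (ihn (Nat.lt_succ_iff.mp h'))
        · rw [le_antisymm h h']
    have hamem : ∀ n, a n ∈ Tseq n := fun n => Nat.sInf_mem (hinf n).1.nonempty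
    have hastrict : StrictMono a := by
      apply strictMono_nat_of_lt_succ
      intro n
      have h1 : a (n+1) ∈ Tseq n \ {a n} := hsub n (hamem (n+1))
      exact lt_of_le_of_ne (Nat.sInf_le h1.1) (fun h => h1.2 h.symm)
    have haS : ∀ n, a n ∈ S := fun n => (hinf n).2 (hamem n)
    have hamemT : ∀ m n, m < n → a n ∈ Tseq (m + 1) := fun m n h =>
      hmono (m+1) n h (hamem n)
    have main : ∀ (z : Finset ℕ) (hzne : z.Nonempty), ↑z ⊆ Set.range a →
        z.card = e + 1 → ∀ i, a i = z.min' hzne → c z = v i := by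
      intro z hzne hz hzc i hieq
      have hmin := z.min'_mem hzne
      have herase : ↑(z.erase (z.min' hzne)) ⊆ Tseq (i + 1) := by
        intro b hb
        rw [Finset.coe_erase] at hb
        obtain ⟨hbz, hbne⟩ := hb
        obtain ⟨j, hjeq⟩ := hz hbz
        have hbgt : z.min' hzne < b :=
          lt_of_le_of_ne (Finset.min'_le z b hbz) (fun h => hbne h.symm)
        have : i < j := by
          apply hastrict.lt_iff_lt.mp
          rw [hieq, hjeq]; exact hbgt
        rw [← hjeq]
        exact hamemT i j this
      have hcard : (z.erase (z.min' hzne)).card = e := by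
        rw [Finset.card_erase_of_mem hmin, hzc]; omega
      have := hv i _ herase hcard
      rw [hieq, Finset.insert_erase hmin] at this
      exact this
    refine ⟨Set.range a, ?_, ?_, ?_⟩
    · rintro _ ⟨n, rfl⟩; exact haS n
    · exact Set.infinite_range_of_injective hastrict.injective
    · intro x y hx hy hxc hyc hmineq
      have hxne : x.Nonempty := Finset.card_pos.mp (by omega)
      have hyne : y.Nonempty := Finset.card_pos.mp (by omega)
      have hmm : x.min' hxne = y.min' hyne := by
        have h1 := Finset.coe_min' hxne
        have h2 := Finset.coe_min' hyne
        rw [← h1, ← h2] at hmineq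
        exact_mod_cast hmineq
      obtain ⟨i, hieq⟩ := hx (x.min'_mem hxne)
      rw [main x hxne hx hxc i hieq, main y hyne hy hyc i (by rw [hieq, hmm])]

theorem regressive_ramsey (k e : ℕ) :
    ∃ N : ℕ, ∀ c : Finset ℕ → ℕ,
      (∀ x : Finset ℕ, x ⊆ Finset.Icc 1 N → x.card = e →
        ∀ hx : x.Nonempty, c x < x.min' hx) →
      ∃ B : Finset ℕ, B ⊆ Finset.Icc 1 N ∧ B.card = k ∧
        ∀ x y : Finset ℕ, x ⊆ B → y ⊆ B → x.card = e → y.card = e →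
          x.min = y.min → c x = c y := by
  classical
  obtain _ | e := e
  · -- e = 0 : trivial
    refine ⟨k, fun c _ => ⟨Finset.Icc 1 k, Finset.Subset.refl _, by
      rw [Nat.card_Icc]; omega, fun x y _ _ hxc hyc _ => ?_⟩⟩
    rw [Finset.card_eq_zero] at hxc hyc
    rw [hxc, hyc]
  by_contra hcon
  rw [not_exists] at hcon
  have hcon' : ∀ N, ∃ c : Finset ℕ → ℕ,
      (∀ x : Finset ℕ, x ⊆ Finset.Icc 1 N → x.card = e + 1 →
        ∀ hx : x.Nonempty, c x < x.min' hx) ∧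
      ¬ ∃ B : Finset ℕ, B ⊆ Finset.Icc 1 N ∧ B.card = k ∧
        (∀ x y : Finset ℕ, x ⊆ B → y ⊆ B → x.card = e + 1 → y.card = e + 1 →
          x.min = y.min → c x = c y) := by
    intro N
    by_contra h
    push_neg at h
    exact hcon N h
  choose C hCreg hCbad using hcon'
  set U : Ultrafilter ℕ := Filter.hyperfilter ℕ with hU
  have hcof : ∀ s : Set ℕ, sᶜ.Finite → s ∈ U := fun s hs =>
    Filter.mem_hyperfilter_of_finite_compl hs
  have hexists : ∀ x : Finset ℕ, ↑x ⊆ Set.Ici 1 → x.card = e + 1 → ∀ hx : x.Nonempty,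
      ∃ v, v < x.min' hx ∧ {N | C N x = v} ∈ U := by
    intro x hx1 hxc hx
    have hbig : {N | x.max' hx ≤ N} ∈ U := by
      apply hcof
      apply Set.Finite.subset (Set.finite_Iio (x.max' hx))
      intro N hN
      simp only [Set.mem_compl_iff, Set.mem_setOf_eq, not_le] at hN
      exact hN
    have hlt : {N | C N x < x.min' hx} ∈ U := by
      refine Filter.mem_of_superset hbig ?_
      intro N hN
      apply hCreg N x _ hxc hx
      intro b hb
      rw [Finset.mem_Icc]
      exact ⟨hx1 hb, le_trans (Finset.le_max' x b hb) hN⟩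
    have hmem : Set.Iio (x.min' hx) ∈ Ultrafilter.map (fun N => C N x) U := by
      rw [Ultrafilter.mem_map]
      exact hlt
    obtain ⟨v, hv1, hv2⟩ := Ultrafilter.eq_pure_of_finite_mem (Set.finite_Iio _) hmem
    refine ⟨v, hv1, ?_⟩
    have h1 : {v} ∈ Ultrafilter.map (fun N => C N x) U := by
      rw [hv2]; exact Filter.mem_pure.mpr rfl
    rw [Ultrafilter.mem_map] at h1
    convert h1 using 1
    rfl
  set c : Finset ℕ → ℕ :=
    fun x => if h : ∃ v, {N | C N x = v} ∈ U then h.choose else 0 with hcdef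
  have hcmem : ∀ x : Finset ℕ, (∃ v, {N | C N x = v} ∈ U) → {N | C N x = c x} ∈ U := by
    intro x h
    rw [hcdef]
    simp only [dif_pos h]
    exact h.choose_spec
  have hcval : ∀ (x : Finset ℕ) (v : ℕ), {N | C N x = v} ∈ U → c x = v := by
    intro x v hv
    have h2 := hcmem x ⟨v, hv⟩
    obtain ⟨N, hN1, hN2⟩ := Filter.nonempty_of_mem (Filter.inter_mem hv h2)
    rw [← hN2, hN1]
  have hcreg : ∀ x : Finset ℕ, ↑x ⊆ Set.Ici 1 → x.card = e + 1 →
      ∀ hx : x.Nonempty, c x < x.min' hx := by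
    intro x hx1 hxc hx
    obtain ⟨v, hv1, hv2⟩ := hexists x hx1 hxc hx
    rw [hcval x v hv2]
    exact hv1
  obtain ⟨H, hHsub, hHinf, hHhom⟩ := km_inf (e + 1) c (Set.Ici 1) (Set.Ici_infinite 1) hcreg
  obtain ⟨t, htH, htc⟩ := hHinf.exists_subset_card_eq k
  have htIci : ↑t ⊆ Set.Ici 1 := htH.trans hHsub
  -- every (e+1)-subset x of t has {N | C N x = c x} ∈ U
  have hsets : ∀ x ∈ t.powersetCard (e + 1), {N | C N x = c x} ∈ U := by
    intro x hxmem
    rw [Finset.mem_powersetCard] at hxmem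
    obtain ⟨hxt, hxc⟩ := hxmem
    have hxne : x.Nonempty := Finset.card_pos.mp (by omega)
    obtain ⟨v, _, hv2⟩ := hexists x ((Finset.coe_subset.mpr hxt).trans htIci) hxc hxne
    exact hcmem x ⟨v, hv2⟩
  have hWall : ((⋂ b ∈ t, {N | b ≤ N}) ∩ ⋂ x ∈ t.powersetCard (e + 1), {N | C N x = c x}) ∈ U := by
    apply Filter.inter_mem
    · refine (Filter.biInter_finset_mem _).mpr (fun b _ => ?_)
      apply hcof
      apply Set.Finite.subset (Set.finite_Iio b)
      intro N hN
      simp only [Set.mem_compl_iff, Set.mem_setOf_eq, not_le] at hN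
      exact hN
    · exact (Filter.biInter_finset_mem _).mpr hsets
  obtain ⟨N, hN1, hN2⟩ := Filter.nonempty_of_mem hWall
  apply hCbad N
  refine ⟨t, ?_, htc, ?_⟩
  · intro b hb
    rw [Finset.mem_Icc]
    refine ⟨htIci hb, ?_⟩
    rw [Set.mem_iInter₂] at hN1
    exact hN1 b hb
  · intro x y hxt hyt hxc hyc hmineq
    rw [Set.mem_iInter₂] at hN2
    have hx' : C N x = c x := hN2 x (Finset.mem_powersetCard.mpr ⟨hxt, hxc⟩)
    have hy' : C N y = c y := hN2 y (Finset.mem_powersetCard.mpr ⟨hyt, hyc⟩)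
    rw [hx', hy']
    exact hHhom x y ((Finset.coe_subset.mpr hxt).trans htH)
      ((Finset.coe_subset.mpr hyt).trans htH) hxc hyc hmineq
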